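/- arXiv:1301.5577 — 2 statements merged into one kernel-verified Lean document; each statement's English description precedes it below -/
import Mathlib

section
/- Let Γ be a connected graph with path metric d. Suppose that to every pair of vertices (a,b) a path P(a,b) from a to b is assigned such that: (i) every vertex of P(a,b) is at distance ≤ 6 from every geodesic joining a and b, and (ii) for all vertices a,b,d there exist pairwise adjacent-or-equal vertices c_{ab} ∈ P(a,b), c_{ad} ∈ P(a,d), c_{db} ∈ P(d,b). Then every geodesic triangle in Γ is 7-centred: there is a vertex at distance ≤ 7 from each of the three sides. -/
/-- An edge-path in a simple graph from `a` to `b`, given as a sequence of vertices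
with consecutive vertices adjacent. -/
structure GraphPath {V : Type*} (G : SimpleGraph V) (a b : V) where
  len : ℕ
  seq : ℕ → V
  first : seq 0 = a
  last : seq len = b
  adj : ∀ i, i < len → G.Adj (seq i) (seq (i + 1))

/-- The set of vertices of an edge-path. -/
def GraphPath.verts {V : Type*} {G : SimpleGraph V} {a b : V} (p : GraphPath G a b) : Set V :=
  p.seq '' {i | i ≤ p.len}

/-- An edge-path is a geodesic if its length realises the path-metric distance. -/
def GraphPath.IsGeodesic {V : Type*} {G : SimpleGraph V} {a b : V} (p : GraphPath G a b) : Prop :=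
  p.len = G.dist a b

theorem triangles_seven_centred {V : Type*} (Γ : SimpleGraph V) (hΓ : Γ.Connected)
    (P : ∀ a b : V, GraphPath Γ a b)
    (hclose : ∀ (a b : V) (G : GraphPath Γ a b), G.IsGeodesic →
      ∀ c ∈ (P a b).verts, ∃ g ∈ G.verts, Γ.dist c g ≤ 6)
    (hcentre : ∀ a b d : V, ∃ cab ∈ (P a b).verts, ∃ cad ∈ (P a d).verts,
      ∃ cdb ∈ (P d b).verts,
        (cab = cad ∨ Γ.Adj cab cad) ∧ (cab = cdb ∨ Γ.Adj cab cdb) ∧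
        (cad = cdb ∨ Γ.Adj cad cdb))
    (a b d : V) (Gab : GraphPath Γ a b) (Gad : GraphPath Γ a d) (Gdb : GraphPath Γ d b)
    (h1 : Gab.IsGeodesic) (h2 : Gad.IsGeodesic) (h3 : Gdb.IsGeodesic) :
    ∃ c : V, (∃ v ∈ Gab.verts, Γ.dist c v ≤ 7) ∧ (∃ v ∈ Gad.verts, Γ.dist c v ≤ 7) ∧
      (∃ v ∈ Gdb.verts, Γ.dist c v ≤ 7) := by
  obtain ⟨cab, hcab, cad, hcad, cdb, hcdb, e1, e2, e3⟩ := hcentre a b d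
  have key : ∀ (x y : V), (x = y ∨ Γ.Adj x y) → ∀ {p q : V} (G : GraphPath Γ p q),
      G.IsGeodesic → y ∈ (P p q).verts → ∃ g ∈ G.verts, Γ.dist x g ≤ 7 := by
    intro x y hxy p q G hG hy
    obtain ⟨g, hg, hd⟩ := hclose p q G hG y hy
    refine ⟨g, hg, ?_⟩
    have hxy1 : Γ.dist x y ≤ 1 := by
      rcases hxy with h | h
      · subst h; simp [SimpleGraph.dist_self]
      · exact le_of_eq (SimpleGraph.dist_eq_one_iff_adj.mpr h)
    calc Γ.dist x g ≤ Γ.dist x y + Γ.dist y g := hΓ.dist_triangle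
      _ ≤ 1 + 6 := Nat.add_le_add hxy1 hd
      _ = 7 := rfl
  exact ⟨cab, key cab cab (Or.inl rfl) Gab h1 hcab, key cab cad e1 Gad h2 hcad,
    key cab cdb e2 Gdb h3 hcdb⟩
end

section
/- Let X be a connected graph with path metric d and Y ⊆ X a full subgraph on a vertex set V(Y). Suppose r : V(X) → V(Y) is a map fixing V(Y) pointwise such that d(r(x), r(x')) ≤ 2 whenever x, x' are adjacent in X, and such that whenever y ∈ V(Y) is adjacent in X to x ∈ V(X), then y is adjacent or equal to r(x) in Y. Then for any two vertices c, c' ∈ V(Y) with d_Y(c,c') ≥ 2, one has d_Y(c,c') ≤ 2·d_X(c,c') − 2; in particular every geodesic in Y is a 2-quasigeodesic in X, i.e. its vertices (c_i) satisfy |i − j| ≤ 2·d_X(c_i, c_j). -/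
private lemma adj_dist_le_one {W : Type*} {G : SimpleGraph W} {u v : W} (h : G.Adj u v) :
    G.dist u v ≤ 1 := by
  have := SimpleGraph.dist_le h.toWalk
  simpa using this

/-- Along a sequence of consecutive adjacent vertices, distance is at most the index gap. -/
private lemma seq_dist_le {W : Type*} {G : SimpleGraph W} (hG : G.Connected) {n : ℕ} (f : ℕ → W)
    (h : ∀ i, i < n → G.Adj (f i) (f (i + 1))) :
    ∀ j, j ≤ n → ∀ i, i ≤ j → G.dist (f i) (f j) ≤ j - i := by
  intro j
  induction j with
  | zero =>
    intro _ i hi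
    simp [Nat.le_zero.mp hi, SimpleGraph.dist_self]
  | succ j ih =>
    intro hj i hi
    rcases Nat.eq_or_lt_of_le hi with h' | h'
    · rw [h']
      simp [SimpleGraph.dist_self]
    · have hij : i ≤ j := Nat.lt_succ_iff.mp h'
      calc G.dist (f i) (f (j + 1))
          ≤ G.dist (f i) (f j) + G.dist (f j) (f (j + 1)) := hG.dist_triangle
        _ ≤ (j - i) + 1 :=
            add_le_add (ih (by omega) i hij) (adj_dist_le_one (h j (by omega)))
        _ = j + 1 - i := by omega

theorem retraction_quasigeodesic {V : Type*} (X : SimpleGraph V) (S : Set V)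
    (hX : X.Connected) (hY : (X.induce S).Connected)
    (r : V → S) (hfix : ∀ y : S, r (y : V) = y)
    (hlip : ∀ x x' : V, X.Adj x x' → (X.induce S).dist (r x) (r x') ≤ 2)
    (hadj : ∀ (y : S) (x : V), X.Adj (y : V) x → r x = y ∨ (X.induce S).Adj y (r x)) :
    (∀ c c' : S, 2 ≤ (X.induce S).dist c c' →
      (X.induce S).dist c c' ≤ 2 * X.dist (c : V) (c' : V) - 2) ∧
    (∀ (a b : S) (G : GraphPath (X.induce S) a b), G.IsGeodesic →
      ∀ i j : ℕ, i ≤ j → j ≤ G.len →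
        j - i ≤ 2 * X.dist (G.seq i : V) (G.seq j : V)) := by
  have part1 : ∀ c c' : S, 2 ≤ (X.induce S).dist c c' →
      (X.induce S).dist c c' ≤ 2 * X.dist (c : V) (c' : V) - 2 := by
    intro c c' hcc
    set n := X.dist (c : V) (c' : V) with hn
    obtain ⟨w, hw⟩ := hX.exists_walk_length_eq_dist (c : V) (c' : V)
    rw [← hn] at hw
    -- rule out n = 0
    rcases Nat.eq_zero_or_pos n with h0 | h0
    · exfalso
      have hd0 : X.dist (c : V) (c' : V) = 0 := by omega
      have hce : c = c' := Subtype.ext ((hX.dist_eq_zero_iff).mp hd0)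
      rw [hce, SimpleGraph.dist_self] at hcc
      omega
    rcases Nat.lt_or_ge n 2 with h1 | h2
    · -- n = 1 : c and c' adjacent in X, contradiction with dist ≥ 2
      exfalso
      have hn1 : n = 1 := by omega
      have hadj01 : X.Adj (w.getVert 0) (w.getVert 1) :=
        w.adj_getVert_succ (by omega)
      rw [w.getVert_zero] at hadj01
      have h1' : w.getVert 1 = (c' : V) := by
        have := w.getVert_length
        rwa [hw, hn1] at this
      rw [h1'] at hadj01
      rcases hadj c c' hadj01 with he | ha
      · rw [hfix c'] at he
        rw [← he, SimpleGraph.dist_self] at hcc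
        omega
      · rw [hfix c'] at ha
        have := adj_dist_le_one ha
        omega
    · -- n ≥ 2 : push the walk to Y via r
      have hstep : ∀ k, k < n → X.Adj (w.getVert k) (w.getVert (k + 1)) := by
        intro k hk
        exact w.adj_getVert_succ (by omega)
      have claim : ∀ k, 1 ≤ k → k ≤ n →
          (X.induce S).dist c (r (w.getVert k)) ≤ 2 * k - 1 := by
        intro k
        induction k with
        | zero => omega
        | succ k ih =>
          intro _ hk
          rcases Nat.eq_zero_or_pos k with hk0 | hk1
          · subst hk0
            simp only [Nat.zero_add]
            have ha0 : X.Adj (c : V) (w.getVert 1) := by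
              have := hstep 0 (by omega)
              rwa [w.getVert_zero] at this
            rcases hadj c (w.getVert 1) ha0 with he | ha
            · rw [he, SimpleGraph.dist_self]; omega
            · have := adj_dist_le_one ha
              omega
          · have hprev := ih hk1 (by omega)
            have hl := hlip (w.getVert k) (w.getVert (k + 1)) (hstep k (by omega))
            calc (X.induce S).dist c (r (w.getVert (k + 1)))
                ≤ (X.induce S).dist c (r (w.getVert k)) +
                  (X.induce S).dist (r (w.getVert k)) (r (w.getVert (k + 1))) :=
                  hY.dist_triangle
              _ ≤ (2 * k - 1) + 2 := add_le_add hprev hl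
              _ = 2 * (k + 1) - 1 := by omega
      have hlast : (X.induce S).dist (r (w.getVert (n - 1))) c' ≤ 1 := by
        have ha : X.Adj (c' : V) (w.getVert (n - 1)) := by
          have := hstep (n - 1) (by omega)
          have he : w.getVert (n - 1 + 1) = (c' : V) := by
            have hlen := w.getVert_length
            rw [hw] at hlen
            rwa [show n - 1 + 1 = n by omega]
          rw [he] at this
          exact this.symm
        rcases hadj c' (w.getVert (n - 1)) ha with he | ha'
        · rw [he, SimpleGraph.dist_self]; omega
        · rw [SimpleGraph.dist_comm]
          exact adj_dist_le_one ha'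
      have hmid := claim (n - 1) (by omega) (by omega)
      calc (X.induce S).dist c c'
          ≤ (X.induce S).dist c (r (w.getVert (n - 1))) +
            (X.induce S).dist (r (w.getVert (n - 1))) c' := hY.dist_triangle
        _ ≤ (2 * (n - 1) - 1) + 1 := add_le_add hmid hlast
        _ ≤ 2 * n - 2 := by omega
  refine ⟨part1, ?_⟩
  intro a b G hgeo i j hij hjlen
  have hsub := seq_dist_le hY G.seq G.adj
  -- lower bound: j - i ≤ dist in Y between seq i and seq j
  have h1 : (X.induce S).dist a (G.seq i) ≤ i := by
    have := hsub i (by omega) 0 (by omega)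
    rw [G.first] at this
    simpa using this
  have h2 : (X.induce S).dist (G.seq j) b ≤ G.len - j := by
    have := hsub G.len le_rfl j hjlen
    rwa [G.last] at this
  have hlb : j - i ≤ (X.induce S).dist (G.seq i) (G.seq j) := by
    have htri : (X.induce S).dist a b ≤
        (X.induce S).dist a (G.seq i) + ((X.induce S).dist (G.seq i) (G.seq j) +
          (X.induce S).dist (G.seq j) b) :=
      le_trans hY.dist_triangle (by exact add_le_add le_rfl hY.dist_triangle)
    have hlen : G.len = (X.induce S).dist a b := hgeo
    omega
  set D := (X.induce S).dist (G.seq i) (G.seq j) with hD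
  rcases Nat.lt_or_ge D 2 with hD1 | hD2
  · -- D ≤ 1, so j - i ≤ 1
    rcases Nat.eq_zero_or_pos D with hD0 | hDpos
    · omega
    · -- D = 1 : seq i ≠ seq j, so X-dist positive
      have hne : G.seq i ≠ G.seq j := by
        intro h
        have : D = 0 := by rw [hD, h, SimpleGraph.dist_self]
        omega
      have : (G.seq i : V) ≠ (G.seq j : V) := fun h => hne (Subtype.ext h)
      have := hX.pos_dist_of_ne this
      omega
  · have := part1 (G.seq i) (G.seq j) hD2
    omega
end
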